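/- Let w_j, w_k, w_l, w_m, m_α, m_β be nonzero complex numbers and set E' = (m_β·w_l)/w_k, F' = (m_α·w_l)/w_m, C = (w_j·w_l)/(w_m·w_k). Assume ‖E'‖ < 1, ‖F'‖ < 1, ‖C‖ < 1. Define f : ℂ → ℂ by f(w) = −Li₂((m_β·w_m)/w_j) − Li₂((m_α·w_k)/w_j) + Li₂((m_β·w)/w_k) + Li₂((m_α·w)/w_m) − Li₂((w_j·w)/(w_m·w_k)) + π²/6 − log((m_β·w_m)/w_j)·log((m_α·w_k)/w_j). Then f has derivative D at w_l, where D = (1/w_l)·(−log(1−E') − log(1−F') + log(1−C)), and moreover exp(w_l·D) = (w_k·w_m − w_j·w_l)/((m_β·w_l − w_k)·(m_α·w_l − w_m)). -/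

import Mathlib

/-- The dilogarithm, defined by the power series `Li₂(z) = ∑_{n ≥ 1} zⁿ / n²`. -/
noncomputable def Li2 (z : ℂ) : ℂ := ∑' n : ℕ, z ^ (n + 1) / ((n : ℂ) + 1) ^ 2

lemma Li2_term_norm_le {z : ℂ} (n : ℕ) : ‖z ^ (n + 1) / ((n : ℂ) + 1) ^ 2‖ ≤ ‖z‖ ^ (n + 1) := by
  rw [norm_div, norm_pow, norm_pow]
  have h1 : (1:ℝ) ≤ ‖(n : ℂ) + 1‖ := by
    have : ((n : ℂ) + 1) = ((n + 1 : ℕ) : ℂ) := by push_cast; ring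
    rw [this, Complex.norm_natCast]
    exact_mod_cast Nat.succ_le_succ (Nat.zero_le n)
  calc ‖z‖ ^ (n+1) / ‖(n : ℂ) + 1‖ ^ 2 ≤ ‖z‖ ^ (n+1) / 1 := by
        apply div_le_div_of_nonneg_left (by positivity) (by norm_num) <;> nlinarith
    _ = ‖z‖ ^ (n+1) := by ring

lemma Li2_hasSum {z : ℂ} (hz : ‖z‖ < 1) :
    HasSum (fun n : ℕ => z ^ (n + 1) / ((n : ℂ) + 1) ^ 2) (Li2 z) := by
  refine Summable.hasSum ?_
  refine Summable.of_norm (Summable.of_nonneg_of_le (fun n => norm_nonneg _)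
    (fun n => Li2_term_norm_le n) ?_)
  have := (summable_geometric_of_lt_one (norm_nonneg z) hz)
  exact (summable_nat_add_iff 1).mpr this

lemma Li2_hasDerivAt {z : ℂ} (hz : ‖z‖ < 1) :
    HasDerivAt Li2 (∑' n : ℕ, z ^ n / ((n : ℂ) + 1)) z := by
  set r : ℝ := (1 + ‖z‖) / 2 with hr
  have hr0 : 0 ≤ r := by positivity
  have hr1 : r < 1 := by rw [hr]; linarith
  have hzr : ‖z‖ < r := by rw [hr]; linarith
  have hmem : z ∈ Metric.ball (0:ℂ) r := by simpa [Metric.mem_ball] using hzr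
  have key := hasDerivAt_of_tendstoUniformlyOn (l := Filter.atTop)
    (f := fun N (w : ℂ) => ∑ n ∈ Finset.range N, w ^ (n + 1) / ((n : ℂ) + 1) ^ 2)
    (f' := fun N (w : ℂ) => ∑ n ∈ Finset.range N, w ^ n / ((n : ℂ) + 1))
    (g := Li2) (g' := fun w => ∑' n : ℕ, w ^ n / ((n : ℂ) + 1))
    (Metric.isOpen_ball) ?_ ?_ ?_ hmem
  · exact key
  · apply tendstoUniformlyOn_tsum_nat (summable_geometric_of_lt_one hr0 hr1)
    intro n x hx
    rw [Metric.mem_ball, dist_zero_right] at hx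
    rw [norm_div, norm_pow]
    have h1 : (1:ℝ) ≤ ‖(n : ℂ) + 1‖ := by
      have : ((n : ℂ) + 1) = ((n + 1 : ℕ) : ℂ) := by push_cast; ring
      rw [this, Complex.norm_natCast]
      exact_mod_cast Nat.succ_le_succ (Nat.zero_le n)
    calc ‖x‖ ^ n / ‖(n : ℂ) + 1‖ ≤ ‖x‖ ^ n / 1 := by
          apply div_le_div_of_nonneg_left (by positivity) (by norm_num) h1
      _ = ‖x‖ ^ n := by ring
      _ ≤ r ^ n := pow_le_pow_left₀ (norm_nonneg x) hx.le n
  · filter_upwards with N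
    intro x hx
    apply HasDerivAt.fun_sum
    intro k _
    have h : HasDerivAt (fun w : ℂ => w ^ (k + 1) / ((k : ℂ) + 1) ^ 2)
        ((k + 1 : ℂ) * x ^ k / ((k : ℂ) + 1) ^ 2) x := by
      simpa using (hasDerivAt_pow (k + 1) x).div_const (((k : ℂ) + 1) ^ 2)
    refine h.congr_deriv ?_
    have hk : ((k : ℂ) + 1) ≠ 0 := Nat.cast_add_one_ne_zero k
    field_simp
  · intro x hx
    rw [Metric.mem_ball, dist_zero_right] at hx
    exact (Li2_hasSum (hx.trans hr1)).tendsto_sum_nat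

lemma Li2_hasDerivAt' {z : ℂ} (hz : ‖z‖ < 1) (hz0 : z ≠ 0) :
    HasDerivAt Li2 (-Complex.log (1 - z) / z) z := by
  have h := Li2_hasDerivAt hz
  have h2 := Complex.hasSum_taylorSeries_neg_log hz
  -- shift index: term at 0 is 0
  have h3 : HasSum (fun n : ℕ => z ^ (n + 1) / ((n : ℂ) + 1)) (-Complex.log (1 - z)) := by
    have h2' : HasSum (fun n : ℕ => z ^ n / (n : ℂ))
        (-Complex.log (1 - z) + ∑ i ∈ Finset.range 1, z ^ i / (i : ℂ)) := by
      simpa using h2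
    have := (hasSum_nat_add_iff (f := fun n : ℕ => z ^ n / (n : ℂ)) 1).mpr h2'
    simpa [Nat.cast_add] using this
  have h4 : HasSum (fun n : ℕ => z ^ n / ((n : ℂ) + 1)) (-Complex.log (1 - z) / z) := by
    have := h3.div_const z
    have e : (fun n : ℕ => z ^ n / ((n : ℂ) + 1)) = fun n : ℕ => z ^ (n + 1) / ((n : ℂ) + 1) / z := by
      funext n
      rw [pow_succ]
      rw [div_div, mul_comm ((n:ℂ)+1) z, ← div_div, mul_div_assoc, div_self hz0, mul_one]
    rw [e]; exact this
  rwa [h4.tsum_eq] at h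

lemma aux_div (L a b w : ℂ) (ha : a ≠ 0) (hb : b ≠ 0) (hw : w ≠ 0) :
    L / (a * w / b) * (a / b) = L / w := by
  have hd : a * w * b ≠ 0 := mul_ne_zero (mul_ne_zero ha hw) hb
  rw [div_div_eq_mul_div, div_mul_div_comm, div_eq_div_iff hd hw]
  ring

/-- The crossing potential of a negative crossing, viewed as a function of the
region variable `w_l`, has derivative `D` at `w_l`, and `exp (w_l * D) = τ_{c,l}`. -/
theorem crossing_potential_deriv_wl_neg
    (wj wk wl wm mα mβ : ℂ)
    (hwj : wj ≠ 0) (hwk : wk ≠ 0) (hwl : wl ≠ 0) (hwm : wm ≠ 0)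
    (hmα : mα ≠ 0) (hmβ : mβ ≠ 0)
    (E' F' C D : ℂ)
    (hE : E' = (mβ * wl) / wk) (hF : F' = (mα * wl) / wm)
    (hC : C = (wj * wl) / (wm * wk))
    (hEnorm : ‖E'‖ < 1) (hFnorm : ‖F'‖ < 1) (hCnorm : ‖C‖ < 1)
    (hD : D = (1 / wl) * (-Complex.log (1 - E') - Complex.log (1 - F') + Complex.log (1 - C))) :
    HasDerivAt (fun w : ℂ =>
      -Li2 ((mβ * wm) / wj) - Li2 ((mα * wk) / wj) + Li2 ((mβ * w) / wk) + Li2 ((mα * w) / wm)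
        - Li2 ((wj * w) / (wm * wk)) + (Real.pi : ℂ) ^ 2 / 6
        - Complex.log ((mβ * wm) / wj) * Complex.log ((mα * wk) / wj)) D wl ∧
    Complex.exp (wl * D) =
      (wk * wm - wj * wl) / ((mβ * wl - wk) * (mα * wl - wm)) := by
  subst hE hF hC hD
  have hE0 : (mβ * wl) / wk ≠ 0 := div_ne_zero (mul_ne_zero hmβ hwl) hwk
  have hF0 : (mα * wl) / wm ≠ 0 := div_ne_zero (mul_ne_zero hmα hwl) hwm
  have hC0 : (wj * wl) / (wm * wk) ≠ 0 :=
    div_ne_zero (mul_ne_zero hwj hwl) (mul_ne_zero hwm hwk)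
  have h1E : (1 : ℂ) - (mβ * wl) / wk ≠ 0 := by
    intro h
    rw [sub_eq_zero] at h
    rw [← h] at hEnorm; simp at hEnorm
  have h1F : (1 : ℂ) - (mα * wl) / wm ≠ 0 := by
    intro h
    rw [sub_eq_zero] at h
    rw [← h] at hFnorm; simp at hFnorm
  have h1C : (1 : ℂ) - (wj * wl) / (wm * wk) ≠ 0 := by
    intro h
    rw [sub_eq_zero] at h
    rw [← h] at hCnorm; simp at hCnorm
  constructor
  · -- derivative part
    have hinnerE : HasDerivAt (fun w : ℂ => (mβ * w) / wk) (mβ / wk) wl := by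
      simpa using ((hasDerivAt_id wl).const_mul mβ).div_const wk
    have hinnerF : HasDerivAt (fun w : ℂ => (mα * w) / wm) (mα / wm) wl := by
      simpa using ((hasDerivAt_id wl).const_mul mα).div_const wm
    have hinnerC : HasDerivAt (fun w : ℂ => (wj * w) / (wm * wk)) (wj / (wm * wk)) wl := by
      simpa using ((hasDerivAt_id wl).const_mul wj).div_const (wm * wk)
    have hcompE : HasDerivAt (fun w : ℂ => Li2 ((mβ * w) / wk))
        ((-Complex.log (1 - (mβ * wl) / wk) / ((mβ * wl) / wk)) * (mβ / wk)) wl :=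
      by have := (Li2_hasDerivAt' hEnorm hE0).comp wl hinnerE; exact this
    have hcompF : HasDerivAt (fun w : ℂ => Li2 ((mα * w) / wm))
        ((-Complex.log (1 - (mα * wl) / wm) / ((mα * wl) / wm)) * (mα / wm)) wl :=
      by have := (Li2_hasDerivAt' hFnorm hF0).comp wl hinnerF; exact this
    have hcompC : HasDerivAt (fun w : ℂ => Li2 ((wj * w) / (wm * wk)))
        ((-Complex.log (1 - (wj * wl) / (wm * wk)) / ((wj * wl) / (wm * wk))) * (wj / (wm * wk)))
        wl :=
      by have := (Li2_hasDerivAt' hCnorm hC0).comp wl hinnerC; exact this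
    have H := (((((hasDerivAt_const wl
        (-Li2 ((mβ * wm) / wj) - Li2 ((mα * wk) / wj))).add hcompE).add hcompF).sub
        hcompC).add_const ((Real.pi : ℂ) ^ 2 / 6)).sub_const
        (Complex.log ((mβ * wm) / wj) * Complex.log ((mα * wk) / wj))
    refine H.congr_deriv ?_
    set L1 := Complex.log (1 - mβ * wl / wk) with hL1
    set L2 := Complex.log (1 - mα * wl / wm) with hL2
    set L3 := Complex.log (1 - wj * wl / (wm * wk)) with hL3
    rw [aux_div (-L1) mβ wk wl hmβ hwk hwl, aux_div (-L2) mα wm wl hmα hwm hwl,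
      aux_div (-L3) wj (wm * wk) wl hwj (mul_ne_zero hwm hwk) hwl]
    field_simp
    ring
  · -- exponential part
    have hstep : wl * ((1 / wl) * (-Complex.log (1 - (mβ * wl) / wk)
        - Complex.log (1 - (mα * wl) / wm) + Complex.log (1 - (wj * wl) / (wm * wk))))
        = Complex.log (1 - (wj * wl) / (wm * wk)) - (Complex.log (1 - (mβ * wl) / wk)
          + Complex.log (1 - (mα * wl) / wm)) := by
      field_simp
      ring
    rw [hstep, Complex.exp_sub, Complex.exp_add, Complex.exp_log h1C, Complex.exp_log h1E,
      Complex.exp_log h1F]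
    have hden1 : mβ * wl - wk ≠ 0 := by
      intro h
      apply h1E
      rw [sub_eq_zero.mp h, div_self hwk, sub_self]
    have hden2 : mα * wl - wm ≠ 0 := by
      intro h
      apply h1F
      rw [sub_eq_zero.mp h, div_self hwm, sub_self]
    rw [div_eq_div_iff (mul_ne_zero h1E h1F) (mul_ne_zero hden1 hden2)]
    field_simp
    ring
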